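/- Let d ≥ 3 and let AGL(d,2) be the group of affine transformations x ↦ g(x) + u of the vector space V = (F_2)^d, where g ∈ GL(d,2) and u ∈ V, acting on the v = 2^d points of V. There is no non-trivial Steiner 5-design D on the point set V admitting AGL(d,2) as a block-transitive group of automorphisms. -/
import Mathlib
set_option maxHeartbeats 1000000

section Aux

variable {d : ℕ}

private lemma vec_add_self (z : Fin d → ZMod 2) : z + z = 0 := by
  funext j
  have : ∀ a : ZMod 2, a + a = 0 := by decide
  exact this (z j)

private lemma vec_cancel (a c : Fin d → ZMod 2) : a + (a + c) = c := by
  rw [← add_assoc, vec_add_self, zero_add]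

/-- transvection-type involution builder -/
private lemma builder (φ : (Fin d → ZMod 2) →ₗ[ZMod 2] ZMod 2) (δ : Fin d → ZMod 2)
    (hφδ : φ δ = 0) :
    ∃ σ : (Fin d → ZMod 2) ≃ₗ[ZMod 2] (Fin d → ZMod 2), ∀ x, σ x = x + φ x • δ := by
  set ℓ : (Fin d → ZMod 2) →ₗ[ZMod 2] (Fin d → ZMod 2) := LinearMap.id + φ.smulRight δ with hℓ
  have happ : ∀ x, ℓ x = x + φ x • δ := fun x => rfl
  have hinv : ∀ x, ℓ (ℓ x) = x := by
    intro x
    rw [happ, happ]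
    have h1 : φ (x + φ x • δ) = φ x := by
      rw [map_add, map_smul, hφδ, smul_zero, add_zero]
    rw [h1, add_assoc]
    have : φ x • δ + φ x • δ = 0 := vec_add_self _
    rw [this, add_zero]
  exact ⟨LinearEquiv.ofLinear ℓ ℓ (LinearMap.ext hinv) (LinearMap.ext hinv), happ⟩

private lemma dual_exists (K : Submodule (ZMod 2) (Fin d → ZMod 2))
    (s : Fin d → ZMod 2) (hs : s ∉ K) :
    ∃ φ : (Fin d → ZMod 2) →ₗ[ZMod 2] ZMod 2, φ s = 1 ∧ ∀ y ∈ K, φ y = 0 := by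
  have hmk : (Submodule.Quotient.mk s : (Fin d → ZMod 2) ⧸ K) ≠ 0 := by
    rwa [ne_eq, Submodule.Quotient.mk_eq_zero]
  obtain ⟨ψ, hψ⟩ : ∃ ψ : Module.Dual (ZMod 2) ((Fin d → ZMod 2) ⧸ K),
      ψ (Submodule.Quotient.mk s) ≠ 0 := by
    by_contra h
    push_neg at h
    exact hmk ((Module.forall_dual_apply_eq_zero_iff (ZMod 2) _).mp h)
  refine ⟨ψ.comp K.mkQ, ?_, ?_⟩
  · have : ∀ a : ZMod 2, a ≠ 0 → a = 1 := by decide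
    exact this _ hψ
  · intro y hy
    simp [Submodule.mkQ_apply, (Submodule.Quotient.mk_eq_zero K).mpr hy]

private lemma span_three (a b c x : Fin d → ZMod 2)
    (hx : x ∈ Submodule.span (ZMod 2) {a, b, c}) :
    ∃ α β γ : ZMod 2, x = α • a + (β • b + γ • c) := by
  rw [Submodule.mem_span_insert] at hx
  obtain ⟨α, y, hy, rfl⟩ := hx
  rw [Submodule.mem_span_insert] at hy
  obtain ⟨β, z, hz, rfl⟩ := hy
  rw [Submodule.mem_span_singleton] at hz
  obtain ⟨γ, rfl⟩ := hz
  exact ⟨α, β, γ, rfl⟩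

private lemma zmod2_cases (a : ZMod 2) : a = 0 ∨ a = 1 := by revert a; decide

end Aux

/-- Let `d ≥ 3` and let `AGL(d,2)` act as the affine maps `x ↦ g x + u`
(`g ∈ GL(d,2)`, `u ∈ V`) on the `v = 2^d` points of `V = (F₂)^d`. There is no non-trivial
Steiner 5-design on `V` admitting `AGL(d,2)` as a block-transitive group of automorphisms. -/
theorem stmt_14 (d : ℕ) (hd : 3 ≤ d)
    (k : ℕ) (htk : 5 < k) (hkv : k < 2 ^ d)
    (B : Finset (Finset (Fin d → ZMod 2)))
    (hblocks : ∀ b ∈ B, b.card = k)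
    (hdesign : ∀ T : Finset (Fin d → ZMod 2), T.card = 5 →
      (B.filter (fun b => T ⊆ b)).card = 1)
    (hAut : ∀ (g : (Fin d → ZMod 2) ≃ₗ[ZMod 2] (Fin d → ZMod 2)) (u : Fin d → ZMod 2),
      ∀ b ∈ B, b.image (fun x => g x + u) ∈ B)
    (hBT : ∀ b₁ ∈ B, ∀ b₂ ∈ B,
      ∃ (g : (Fin d → ZMod 2) ≃ₗ[ZMod 2] (Fin d → ZMod 2)) (u : Fin d → ZMod 2),
        b₁.image (fun x => g x + u) = b₂) :
    False := by
  classical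
  -- indices and basis vectors
  set i0 : Fin d := ⟨0, by omega⟩ with hi0
  set i1 : Fin d := ⟨1, by omega⟩ with hi1
  set i2 : Fin d := ⟨2, by omega⟩ with hi2
  set e0 : Fin d → ZMod 2 := Pi.single i0 1 with he0
  set e1 : Fin d → ZMod 2 := Pi.single i1 1 with he1
  set e2 : Fin d → ZMod 2 := Pi.single i2 1 with he2
  have hne01 : i0 ≠ i1 := Fin.ne_of_val_ne (by norm_num)
  have hne02 : i0 ≠ i2 := Fin.ne_of_val_ne (by norm_num)
  have hne12 : i1 ≠ i2 := Fin.ne_of_val_ne (by norm_num)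
  -- evaluation table
  have ev00 : e0 i0 = 1 := Pi.single_eq_same i0 1
  have ev01 : e0 i1 = 0 := Pi.single_eq_of_ne hne01.symm 1
  have ev02 : e0 i2 = 0 := Pi.single_eq_of_ne hne02.symm 1
  have ev10 : e1 i0 = 0 := Pi.single_eq_of_ne hne01 1
  have ev11 : e1 i1 = 1 := Pi.single_eq_same i1 1
  have ev12 : e1 i2 = 0 := Pi.single_eq_of_ne hne12.symm 1
  have ev20 : e2 i0 = 0 := Pi.single_eq_of_ne hne02 1
  have ev21 : e2 i1 = 0 := Pi.single_eq_of_ne hne12 1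
  have ev22 : e2 i2 = 1 := Pi.single_eq_same i2 1
  -- the 5-set T and the eight-point set Ufin
  set T : Finset (Fin d → ZMod 2) := {0, e2, e2 + e0, e2 + e1, e2 + e0 + e1} with hT
  set Ufin : Finset (Fin d → ZMod 2) :=
    {0, e2, e2 + e0, e2 + e1, e2 + e0 + e1, e0, e1, e0 + e1} with hUfin
  set Uspan : Submodule (ZMod 2) (Fin d → ZMod 2) :=
    Submodule.span (ZMod 2) {e0, e1, e2} with hUspan
  -- distinctness helper
  have hdist : ∀ (x y : Fin d → ZMod 2) (j : Fin d), x j ≠ y j → x ≠ y := by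
    intro x y j h hxy; exact h (by rw [hxy])
  -- disequalities among the points of T
  have d01 : (0 : Fin d → ZMod 2) ≠ e2 := hdist _ _ i2 (by simp [ev22])
  have d02 : (0 : Fin d → ZMod 2) ≠ e2 + e0 := hdist _ _ i2 (by simp [ev22, ev02])
  have d03 : (0 : Fin d → ZMod 2) ≠ e2 + e1 := hdist _ _ i2 (by simp [ev22, ev12])
  have d04 : (0 : Fin d → ZMod 2) ≠ e2 + e0 + e1 := hdist _ _ i2 (by simp [ev22, ev02, ev12])
  have d12 : e2 ≠ e2 + e0 := hdist _ _ i0 (by simp [ev20, ev00])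
  have d13 : e2 ≠ e2 + e1 := hdist _ _ i1 (by simp [ev21, ev11])
  have d14 : e2 ≠ e2 + e0 + e1 := hdist _ _ i0 (by simp [ev20, ev00, ev10])
  have d23 : e2 + e0 ≠ e2 + e1 := hdist _ _ i0 (by simp [ev20, ev00, ev10])
  have d24 : e2 + e0 ≠ e2 + e0 + e1 := hdist _ _ i1 (by simp [ev21, ev01, ev11])
  have d34 : e2 + e1 ≠ e2 + e0 + e1 := hdist _ _ i0 (by simp [ev20, ev00, ev10])
  have hT5 : T.card = 5 := by
    rw [hT]
    rw [Finset.card_insert_of_notMem (by simp [d01, d02, d03, d04]),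
      Finset.card_insert_of_notMem (by simp [d12, d13, d14]),
      Finset.card_insert_of_notMem (by simp [d23, d24]),
      Finset.card_insert_of_notMem (by simp [d34]),
      Finset.card_singleton]
  have hTsubU : T ⊆ Ufin := by
    intro x hx
    simp only [hT, Finset.mem_insert, Finset.mem_singleton] at hx
    rcases hx with h|h|h|h|h <;> subst h <;> simp [hUfin]
  -- span membership generators
  have me0 : e0 ∈ Uspan := Submodule.subset_span (by simp)
  have me1 : e1 ∈ Uspan := Submodule.subset_span (by simp)
  have me2 : e2 ∈ Uspan := Submodule.subset_span (by simp)
  have hUfin_mem_span : ∀ x ∈ Ufin, x ∈ Uspan := by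
    intro x hx
    simp only [hUfin, Finset.mem_insert, Finset.mem_singleton] at hx
    rcases hx with h|h|h|h|h|h|h|h <;> subst h
    · exact Submodule.zero_mem _
    · exact me2
    · exact Submodule.add_mem _ me2 me0
    · exact Submodule.add_mem _ me2 me1
    · exact Submodule.add_mem _ (Submodule.add_mem _ me2 me0) me1
    · exact me0
    · exact me1
    · exact Submodule.add_mem _ me0 me1
  have hspan_mem_fin : ∀ x, x ∈ Uspan → x ∈ Ufin := by
    intro x hx
    rw [hUspan] at hx
    obtain ⟨α, β, γ, rfl⟩ := span_three e0 e1 e2 x hx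
    simp only [hUfin, Finset.mem_insert, Finset.mem_singleton]
    rcases zmod2_cases α with hα|hα <;> rcases zmod2_cases β with hβ|hβ <;>
      rcases zmod2_cases γ with hγ|hγ <;> subst hα <;> subst hβ <;> subst hγ <;>
      simp only [zero_smul, one_smul, zero_add, add_zero]
    · simp [hUfin]
    · simp [hUfin]
    · simp [hUfin]
    · rw [show e1 + e2 = e2 + e1 from add_comm _ _]; simp [hUfin]
    · simp [hUfin]
    · rw [show e0 + e2 = e2 + e0 from add_comm _ _]; simp [hUfin]
    · simp [hUfin]
    · rw [show e0 + (e1 + e2) = e2 + e0 + e1 from by abel]; simp [hUfin]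
  -- the "all coordinates beyond {0,1,2} vanish implies in span" lemma
  have hspan_univ : ∀ x : Fin d → ZMod 2,
      (∀ j : Fin d, j ≠ i0 → j ≠ i1 → j ≠ i2 → x j = 0) → x ∈ Uspan := by
    intro x hx
    have hxeq : x = x i0 • e0 + (x i1 • e1 + x i2 • e2) := by
      funext j
      by_cases hj0 : j = i0
      · subst hj0
        simp [ev00, ev10, ev20]
      by_cases hj1 : j = i1
      · subst hj1
        simp [ev01, ev11, ev21]
      by_cases hj2 : j = i2
      · subst hj2
        simp [ev02, ev12, ev22]
      · rw [hx j hj0 hj1 hj2]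
        simp [he0, he1, he2, Pi.single_eq_of_ne hj0, Pi.single_eq_of_ne hj1,
          Pi.single_eq_of_ne hj2]
    rw [hxeq]
    exact Submodule.add_mem _ (Submodule.smul_mem _ _ me0)
      (Submodule.add_mem _ (Submodule.smul_mem _ _ me1) (Submodule.smul_mem _ _ me2))
  -- design basics
  have huniq : ∀ T' : Finset (Fin d → ZMod 2), T'.card = 5 →
      ∀ b₁ ∈ B, T' ⊆ b₁ → ∀ b₂ ∈ B, T' ⊆ b₂ → b₁ = b₂ := by
    intro T' hT' b₁ hb₁ hs₁ b₂ hb₂ hs₂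
    obtain ⟨a, ha⟩ := Finset.card_eq_one.mp (hdesign T' hT')
    have h₁ : b₁ ∈ B.filter (fun b => T' ⊆ b) := Finset.mem_filter.mpr ⟨hb₁, hs₁⟩
    have h₂ : b₂ ∈ B.filter (fun b => T' ⊆ b) := Finset.mem_filter.mpr ⟨hb₂, hs₂⟩
    rw [ha, Finset.mem_singleton] at h₁ h₂
    rw [h₁, h₂]
  have hex : ∀ T' : Finset (Fin d → ZMod 2), T'.card = 5 → ∃ b ∈ B, T' ⊆ b := by
    intro T' hT'
    have : (B.filter (fun b => T' ⊆ b)).Nonempty := by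
      rw [← Finset.card_pos, hdesign T' hT']; norm_num
    obtain ⟨b, hb⟩ := this
    rw [Finset.mem_filter] at hb
    exact ⟨b, hb.1, hb.2⟩
  -- the block b containing T
  obtain ⟨b, hbB, hTb⟩ := hex T hT5
  -- stabilizer lemma
  have hstab : ∀ (g : (Fin d → ZMod 2) ≃ₗ[ZMod 2] (Fin d → ZMod 2)),
      Finset.image (fun x => g x) T = T → Finset.image (fun x => g x) b = b := by
    intro g hgT
    have h1 : Finset.image (fun x => g x + 0) b ∈ B := hAut g 0 b hbB
    simp only [add_zero] at h1
    have h2 : T ⊆ Finset.image (fun x => g x) b := by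
      conv_lhs => rw [← hgT]
      exact Finset.image_subset_image hTb
    exact huniq T hT5 _ h1 h2 b hbB hTb
  have hmemb : ∀ (g : (Fin d → ZMod 2) ≃ₗ[ZMod 2] (Fin d → ZMod 2)),
      Finset.image (fun x => g x) T = T → ∀ x ∈ b, g x ∈ b := by
    intro g hgT x hx
    rw [← hstab g hgT]
    exact Finset.mem_image_of_mem _ hx
  -- cardinality of the universe
  have hcard_univ : (Finset.univ : Finset (Fin d → ZMod 2)).card = 2 ^ d := by
    simp [Finset.card_univ]
  have hUcard : Ufin.card ≤ 8 := by
    refine le_trans (Finset.card_insert_le _ _) (Nat.succ_le_succ ?_)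
    refine le_trans (Finset.card_insert_le _ _) (Nat.succ_le_succ ?_)
    refine le_trans (Finset.card_insert_le _ _) (Nat.succ_le_succ ?_)
    refine le_trans (Finset.card_insert_le _ _) (Nat.succ_le_succ ?_)
    refine le_trans (Finset.card_insert_le _ _) (Nat.succ_le_succ ?_)
    refine le_trans (Finset.card_insert_le _ _) (Nat.succ_le_succ ?_)
    refine le_trans (Finset.card_insert_le _ _) ?_
    exact Nat.succ_le_succ (le_of_eq (Finset.card_singleton _))
  -- any two blocks sharing 5 points are equal
  have hpair : ∀ b₁ ∈ B, ∀ b₂ ∈ B, 5 ≤ (b₁ ∩ b₂).card → b₁ = b₂ := by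
    intro b₁ hb₁ b₂ hb₂ hcard
    obtain ⟨T', hT'sub, hT'card⟩ := Finset.exists_subset_card_eq hcard
    exact huniq T' hT'card b₁ hb₁ (hT'sub.trans (Finset.inter_subset_left))
      b₂ hb₂ (hT'sub.trans (Finset.inter_subset_right))
  -- membership of T's elements in the span
  have hTspan : ∀ x ∈ T, x ∈ Uspan := fun x hx => hUfin_mem_span x (hTsubU hx)
  -- MAIN CASE SPLIT
  by_cases hcase : ∃ s ∈ b, s ∉ Uspan
  · -- Case (i): b contains a point outside the 3-space
    obtain ⟨s, hsb, hsU⟩ := hcase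
    by_cases h4 : 4 ≤ d
    · -- all points outside Uspan lie in b
      have hall : ∀ s', s' ∉ Uspan → s' ∈ b := by
        intro s' hs'U
        by_cases hss : s' = s
        · subst hss; exact hsb
        set δ : Fin d → ZMod 2 := s + s' with hδ
        set K : Submodule (ZMod 2) (Fin d → ZMod 2) :=
          Submodule.span (ZMod 2) (insert δ {e0, e1, e2}) with hK
        have hUK : Uspan ≤ K := by
          rw [hUspan, hK]
          exact Submodule.span_mono (Set.subset_insert _ _)
        have hsK : s ∉ K := by
          intro hmem
          rw [hK, Submodule.mem_span_insert] at hmem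
          obtain ⟨a, z, hz, hEq⟩ := hmem
          rcases zmod2_cases a with ha|ha <;> subst ha
          · rw [zero_smul, zero_add] at hEq
            exact hsU (by rw [hUspan]; rw [hEq]; exact hz)
          · rw [one_smul] at hEq
            have hz' : z = s' := by
              calc z = δ + (δ + z) := (vec_cancel _ _).symm
              _ = δ + s := by rw [← hEq]
              _ = s' := by
                  rw [hδ, add_comm s s', add_assoc, vec_add_self, add_zero]
            exact hs'U (by rw [hUspan]; rw [← hz']; exact hz)
        obtain ⟨φ, hφs, hφK⟩ := dual_exists K s hsK
        have hδK : δ ∈ K := Submodule.subset_span (Set.mem_insert δ _)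
        obtain ⟨σ, hσ⟩ := builder φ δ (hφK δ hδK)
        have hfixT : ∀ x ∈ T, (fun x => σ x) x = id x := by
          intro x hx
          simp only [id]
          rw [hσ, hφK x (hUK (hTspan x hx)), zero_smul, add_zero]
        have himg : Finset.image (fun x => σ x) T = T := by
          rw [Finset.image_congr hfixT, Finset.image_id]
        have hmem := hmemb σ himg s hsb
        rw [hσ s, hφs, one_smul, hδ, vec_cancel] at hmem
        exact hmem
      -- b is big: card ≥ 2^d - 3
      have hbig : 2 ^ d - 3 ≤ k := by
        have hsub : (Finset.univ \ Ufin) ∪ T ⊆ b := by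
          refine Finset.union_subset ?_ hTb
          intro x hx
          rw [Finset.mem_sdiff] at hx
          exact hall x (fun h => hx.2 (hspan_mem_fin x h))
        have hdisj : Disjoint (Finset.univ \ Ufin) T := by
          rw [Finset.disjoint_left]
          intro x hx hxT
          exact (Finset.mem_sdiff.mp hx).2 (hTsubU hxT)
        have h1 := Finset.card_le_card hsub
        rw [Finset.card_union_of_disjoint hdisj,
          Finset.card_sdiff_of_subset (Finset.subset_univ _), hcard_univ, hT5,
          hblocks b hbB] at h1
        omega
      -- all blocks are equal
      have hone : ∀ b' ∈ B, b' = b := by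
        intro b' hb'
        refine hpair b' hb' b hbB ?_
        have h1 : (b' ∩ b).card + (b' ∪ b).card = b'.card + b.card :=
          Finset.card_inter_add_card_union b' b
        have h2 : (b' ∪ b).card ≤ 2 ^ d := by
          rw [← hcard_univ]; exact Finset.card_le_univ _
        have h3 : b'.card = k := hblocks b' hb'
        have h4' : b.card = k := hblocks b hbB
        have h16 : (16 : ℕ) ≤ 2 ^ d := by
          calc (16 : ℕ) = 2 ^ 4 := by norm_num
          _ ≤ 2 ^ d := Nat.pow_le_pow_right (by norm_num) h4
        omega
      -- find a point outside b and a 5-set through it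
      have hbk : b.card = k := hblocks b hbB
      have hqex : (Finset.univ \ b).Nonempty := by
        rw [← Finset.card_pos, Finset.card_sdiff_of_subset (Finset.subset_univ b), hcard_univ, hbk]
        omega
      obtain ⟨q, hq⟩ := hqex
      have hqb : q ∉ b := (Finset.mem_sdiff.mp hq).2
      have h4le : 4 ≤ (Finset.univ.erase q).card := by
        rw [Finset.card_erase_of_mem (Finset.mem_univ q), hcard_univ]
        have : (8:ℕ) ≤ 2^d := by
          calc (8:ℕ) = 2^3 := by norm_num
          _ ≤ 2^d := Nat.pow_le_pow_right (by norm_num) hd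
        omega
      obtain ⟨S₄, hS₄sub, hS₄card⟩ := Finset.exists_subset_card_eq h4le
      have hqS₄ : q ∉ S₄ := fun h => (Finset.mem_erase.mp (hS₄sub h)).1 rfl
      obtain ⟨b', hb'B, hb'sub⟩ := hex (insert q S₄)
        (by rw [Finset.card_insert_of_notMem hqS₄, hS₄card])
      have : q ∈ b := by
        rw [← hone b' hb'B]
        exact hb'sub (Finset.mem_insert_self q S₄)
      exact hqb this
    · -- d = 3 : no point outside Uspan
      have hd3 : d = 3 := by omega
      apply hsU
      apply hspan_univ
      intro j h0 h1 h2
      exfalso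
      have hjlt := j.isLt
      have hv0 : j.val ≠ 0 := by
        intro hv; exact h0 (Fin.ext (by rw [hv, hi0]))
      have hv1 : j.val ≠ 1 := by
        intro hv; exact h1 (Fin.ext (by rw [hv, hi1]))
      have hv2 : j.val ≠ 2 := by
        intro hv; exact h2 (Fin.ext (by rw [hv, hi2]))
      omega
  · -- Case (ii): b ⊆ Ufin, then b = Ufin
    push_neg at hcase
    have hbU : b ⊆ Ufin := fun x hx => hspan_mem_fin x (hcase x hx)
    -- b has a point outside T
    have hsex : ∃ s ∈ b, s ∉ T := by
      by_contra h
      push_neg at h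
      have : b ⊆ T := h
      have := Finset.card_le_card this
      rw [hblocks b hbB, hT5] at this
      omega
    obtain ⟨s, hsb, hsT⟩ := hsex
    have hs3 : s = e0 ∨ s = e1 ∨ s = e0 + e1 := by
      have hthis := hbU hsb
      simp only [hUfin, Finset.mem_insert, Finset.mem_singleton] at hthis
      rcases hthis with h|h|h|h|h|h|h|h
      · exact absurd (by rw [h]; simp [hT]) hsT
      · exact absurd (by rw [h]; simp [hT]) hsT
      · exact absurd (by rw [h]; simp [hT]) hsT
      · exact absurd (by rw [h]; simp [hT]) hsT
      · exact absurd (by rw [h]; simp [hT]) hsT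
      · exact Or.inl h
      · exact Or.inr (Or.inl h)
      · exact Or.inr (Or.inr h)
    -- two transvection symmetries of T
    obtain ⟨φ1, hφ1⟩ : ∃ f : (Fin d → ZMod 2) →ₗ[ZMod 2] ZMod 2, ∀ x, f x = x i0 + x i1 :=
      ⟨LinearMap.proj (R := ZMod 2) (φ := fun _ : Fin d => ZMod 2) i0
        + LinearMap.proj (R := ZMod 2) (φ := fun _ : Fin d => ZMod 2) i1, fun x => rfl⟩
    obtain ⟨σ₁, hσ₁⟩ := builder φ1 (e0 + e1)
      (by rw [hφ1, Pi.add_apply, Pi.add_apply, ev00, ev10, ev01, ev11]; decide)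
    obtain ⟨φ2, hφ2⟩ : ∃ f : (Fin d → ZMod 2) →ₗ[ZMod 2] ZMod 2, ∀ x, f x = x i0 :=
      ⟨LinearMap.proj (R := ZMod 2) (φ := fun _ : Fin d => ZMod 2) i0, fun x => rfl⟩
    obtain ⟨σ₂, hσ₂⟩ := builder φ2 e1 (by rw [hφ2, ev10])
    -- values of σ₁
    have v10 : σ₁ 0 = 0 := by rw [hσ₁]; simp
    have v1e0 : σ₁ e0 = e1 := by
      rw [hσ₁, hφ1]
      rw [ev00, ev01, add_zero, one_smul, vec_cancel]
    have v1e1 : σ₁ e1 = e0 := by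
      rw [hσ₁, hφ1]
      rw [ev10, ev11, zero_add, one_smul, add_comm e0 e1, vec_cancel]
    have v1e01 : σ₁ (e0 + e1) = e0 + e1 := by
      rw [hσ₁, hφ1]
      simp only [Pi.add_apply, ev00, ev01, ev10, ev11]
      rw [show ((1 : ZMod 2) + 0 + (0 + 1)) = 0 from by decide, zero_smul, add_zero]
    have v1e2 : σ₁ e2 = e2 := by
      rw [hσ₁, hφ1]
      rw [ev20, ev21, add_zero, zero_smul, add_zero]
    have v1e20 : σ₁ (e2 + e0) = e2 + e1 := by
      rw [hσ₁, hφ1]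
      simp only [Pi.add_apply, ev20, ev21, ev00, ev01]
      rw [show ((0 : ZMod 2) + 1 + (0 + 0)) = 1 from by decide, one_smul,
        add_assoc, vec_cancel]
    have v1e21 : σ₁ (e2 + e1) = e2 + e0 := by
      rw [hσ₁, hφ1]
      simp only [Pi.add_apply, ev20, ev21, ev10, ev11]
      rw [show ((0 : ZMod 2) + 0 + (0 + 1)) = 1 from by decide, one_smul,
        add_assoc, show e1 + (e0 + e1) = e0 from by rw [add_comm e0 e1]; exact vec_cancel _ _]
    have v1e201 : σ₁ (e2 + e0 + e1) = e2 + e0 + e1 := by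
      rw [hσ₁, hφ1]
      simp only [Pi.add_apply, ev20, ev21, ev00, ev01, ev10, ev11]
      rw [show ((0 : ZMod 2) + 1 + 0 + (0 + 0 + 1)) = 0 from by decide, zero_smul, add_zero]
    -- values of σ₂
    have v20 : σ₂ 0 = 0 := by rw [hσ₂]; simp
    have v2e0 : σ₂ e0 = e0 + e1 := by
      rw [hσ₂, hφ2, ev00, one_smul]
    have v2e1 : σ₂ e1 = e1 := by
      rw [hσ₂, hφ2, ev10, zero_smul, add_zero]
    have v2e01 : σ₂ (e0 + e1) = e0 := by
      rw [hσ₂, hφ2]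
      simp only [Pi.add_apply, ev00, ev10]
      rw [show ((1 : ZMod 2) + 0) = 1 from by decide, one_smul, add_assoc,
        vec_add_self, add_zero]
    have v2e2 : σ₂ e2 = e2 := by
      rw [hσ₂, hφ2, ev20, zero_smul, add_zero]
    have v2e20 : σ₂ (e2 + e0) = e2 + e0 + e1 := by
      rw [hσ₂, hφ2]
      simp only [Pi.add_apply, ev20, ev00]
      rw [show ((0 : ZMod 2) + 1) = 1 from by decide, one_smul]
    have v2e21 : σ₂ (e2 + e1) = e2 + e1 := by
      rw [hσ₂, hφ2]
      simp only [Pi.add_apply, ev20, ev10]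
      rw [show ((0 : ZMod 2) + 0) = 0 from by decide, zero_smul, add_zero]
    have v2e201 : σ₂ (e2 + e0 + e1) = e2 + e0 := by
      rw [hσ₂, hφ2]
      simp only [Pi.add_apply, ev20, ev00, ev10]
      rw [show ((0 : ZMod 2) + 1 + 0) = 1 from by decide, one_smul, add_assoc,
        vec_add_self, add_zero]
    -- σ₁ and σ₂ stabilize T
    have himg1 : Finset.image (fun x => σ₁ x) T = T := by
      refine Finset.eq_of_subset_of_card_le ?_ ?_
      · intro y hy
        obtain ⟨x, hx, rfl⟩ := Finset.mem_image.mp hy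
        simp only [hT, Finset.mem_insert, Finset.mem_singleton] at hx
        rcases hx with h|h|h|h|h <;> subst h
        · rw [v10]; simp [hT]
        · rw [v1e2]; simp [hT]
        · rw [v1e20]; simp [hT]
        · rw [v1e21]; simp [hT]
        · rw [v1e201]; simp [hT]
      · rw [Finset.card_image_of_injective _ σ₁.injective]
    have himg2 : Finset.image (fun x => σ₂ x) T = T := by
      refine Finset.eq_of_subset_of_card_le ?_ ?_
      · intro y hy
        obtain ⟨x, hx, rfl⟩ := Finset.mem_image.mp hy
        simp only [hT, Finset.mem_insert, Finset.mem_singleton] at hx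
        rcases hx with h|h|h|h|h <;> subst h
        · rw [v20]; simp [hT]
        · rw [v2e2]; simp [hT]
        · rw [v2e20]; simp [hT]
        · rw [v2e21]; simp [hT]
        · rw [v2e201]; simp [hT]
      · rw [Finset.card_image_of_injective _ σ₂.injective]
    -- the three W-points all lie in b
    have he0b : e0 ∈ b := by
      rcases hs3 with h|h|h
      · rwa [h] at hsb
      · have := hmemb σ₁ himg1 s hsb
        rwa [h, v1e1] at this
      · have := hmemb σ₂ himg2 s hsb
        rwa [h, v2e01] at this
    have he1b : e1 ∈ b := by
      have := hmemb σ₁ himg1 e0 he0b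
      rwa [v1e0] at this
    have he01b : e0 + e1 ∈ b := by
      have := hmemb σ₂ himg2 e0 he0b
      rwa [v2e0] at this
    -- hence Ufin ⊆ b, so b = Ufin
    have hUb : Ufin ⊆ b := by
      intro x hx
      simp only [hUfin, Finset.mem_insert, Finset.mem_singleton] at hx
      rcases hx with h|h|h|h|h|h|h|h
      · subst h; exact hTb (by simp [hT])
      · subst h; exact hTb (by simp [hT])
      · subst h; exact hTb (by simp [hT])
      · subst h; exact hTb (by simp [hT])
      · subst h; exact hTb (by simp [hT])
      · subst h; exact he0b
      · subst h; exact he1b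
      · subst h; exact he01b
    have hbeq : b = Ufin := Finset.Subset.antisymm hbU hUb
    by_cases h4 : 4 ≤ d
    · -- use an affinely independent 5-set
      set i3 : Fin d := ⟨3, by omega⟩ with hi3
      set e3 : Fin d → ZMod 2 := Pi.single i3 1 with he3
      have hne03 : i0 ≠ i3 := Fin.ne_of_val_ne (by norm_num)
      have hne13 : i1 ≠ i3 := Fin.ne_of_val_ne (by norm_num)
      have hne23 : i2 ≠ i3 := Fin.ne_of_val_ne (by norm_num)
      have hsne : ∀ i j : Fin d, i ≠ j →
          (Pi.single i 1 : Fin d → ZMod 2) ≠ Pi.single j 1 := by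
        intro i j hij h
        have := congrFun h i
        rw [Pi.single_eq_same, Pi.single_eq_of_ne hij] at this
        exact one_ne_zero this
      have h0ne : ∀ i : Fin d, (0 : Fin d → ZMod 2) ≠ (Pi.single i 1 : Fin d → ZMod 2) := by
        intro i h
        have := congrFun h i
        rw [Pi.single_eq_same] at this
        exact zero_ne_one this
      have dz0 : (0 : Fin d → ZMod 2) ≠ e0 := by rw [he0]; exact h0ne _
      have dz1 : (0 : Fin d → ZMod 2) ≠ e1 := by rw [he1]; exact h0ne _
      have dz2 : (0 : Fin d → ZMod 2) ≠ e2 := by rw [he2]; exact h0ne _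
      have dz3 : (0 : Fin d → ZMod 2) ≠ e3 := by rw [he3]; exact h0ne _
      have de01 : e0 ≠ e1 := by rw [he0, he1]; exact hsne _ _ hne01
      have de02 : e0 ≠ e2 := by rw [he0, he2]; exact hsne _ _ hne02
      have de03 : e0 ≠ e3 := by rw [he0, he3]; exact hsne _ _ hne03
      have de12 : e1 ≠ e2 := by rw [he1, he2]; exact hsne _ _ hne12
      have de13 : e1 ≠ e3 := by rw [he1, he3]; exact hsne _ _ hne13
      have de23 : e2 ≠ e3 := by rw [he2, he3]; exact hsne _ _ hne23
      set T₂ : Finset (Fin d → ZMod 2) := {0, e0, e1, e2, e3} with hT₂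
      have hT₂5 : T₂.card = 5 := by
        rw [hT₂]
        rw [Finset.card_insert_of_notMem (by simp [dz0, dz1, dz2, dz3]),
          Finset.card_insert_of_notMem (by simp [de01, de02, de03]),
          Finset.card_insert_of_notMem (by simp [de12, de13]),
          Finset.card_insert_of_notMem (by simp [de23]),
          Finset.card_singleton]
      obtain ⟨b₂, hb₂B, hT₂b₂⟩ := hex T₂ hT₂5
      obtain ⟨g, u, hgu⟩ := hBT b hbB b₂ hb₂B
      have hmemT₂ : ∀ t ∈ T₂, ∃ w ∈ b, g w + u = t := by
        intro t ht
        have : t ∈ Finset.image (fun x => g x + u) b := by rw [hgu]; exact hT₂b₂ ht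
        obtain ⟨w, hw, hwt⟩ := Finset.mem_image.mp this
        exact ⟨w, hw, hwt⟩
      obtain ⟨w4, hw4b, hw4⟩ := hmemT₂ 0 (by simp [hT₂])
      have hu : u = g w4 := by
        have h := vec_cancel (g w4) u
        rw [hw4, add_zero] at h
        exact h.symm
      have key : ∀ t, (∃ w ∈ b, g w + u = t) → g.symm t ∈ Uspan := by
        rintro t ⟨w, hwb, hwt⟩
        have h1 : g (w + w4) = t := by rw [map_add, ← hu, hwt]
        have h2 : g.symm t = w + w4 := by rw [← h1, LinearEquiv.symm_apply_apply]
        rw [h2]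
        exact Submodule.add_mem _
          (hUfin_mem_span w (by rw [← hbeq]; exact hwb))
          (hUfin_mem_span w4 (by rw [← hbeq]; exact hw4b))
      have hge0 : g.symm e0 ∈ Uspan := key e0 (hmemT₂ e0 (by simp [hT₂]))
      have hge1 : g.symm e1 ∈ Uspan := key e1 (hmemT₂ e1 (by simp [hT₂]))
      have hge2 : g.symm e2 ∈ Uspan := key e2 (hmemT₂ e2 (by simp [hT₂]))
      have hge3 : g.symm e3 ∈ Uspan := key e3 (hmemT₂ e3 (by simp [hT₂]))
      -- four linearly independent vectors inside a span of three vectors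
      obtain ⟨ι, hι⟩ : ∃ f : Fin 4 → Fin d, ∀ j, (f j).val = j.val :=
        ⟨fun j => ⟨j.val, by omega⟩, fun j => rfl⟩
      have hιinj : Function.Injective ι := by
        intro a b h
        have h2 : (ι a).val = (ι b).val := congrArg Fin.val h
        rw [hι, hι] at h2
        exact Fin.ext h2
      have hbase : LinearIndependent (ZMod 2) (fun i : Fin d => (Pi.single i 1 : Fin d → ZMod 2)) := by
        have hb' := (Pi.basisFun (ZMod 2) (Fin d)).linearIndependent
        have hcoe : ⇑(Pi.basisFun (ZMod 2) (Fin d)) = fun i : Fin d => (Pi.single i 1 : Fin d → ZMod 2) := by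
          funext i
          exact Pi.basisFun_apply (ZMod 2) (Fin d) i
        rwa [hcoe] at hb'
      have hind : LinearIndependent (ZMod 2) (fun j : Fin 4 => (Pi.single (ι j) 1 : Fin d → ZMod 2)) :=
        hbase.comp ι hιinj
      have hmap : LinearIndependent (ZMod 2)
          (fun j : Fin 4 => g.symm (Pi.single (ι j) 1 : Fin d → ZMod 2)) := by
        have := hind.map' g.symm.toLinearMap g.symm.ker
        exact this
      have hιval : ∀ j : Fin 4, g.symm (Pi.single (ι j) 1 : Fin d → ZMod 2) ∈ Uspan := by
        intro j
        have hv := hι j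
        have hlt := j.isLt
        have hj : j.val = 0 ∨ j.val = 1 ∨ j.val = 2 ∨ j.val = 3 := by omega
        rcases hj with h|h|h|h
        · rw [show ι j = i0 from Fin.ext (by simp [hv, h, hi0]), ← he0]; exact hge0
        · rw [show ι j = i1 from Fin.ext (by simp [hv, h, hi1]), ← he1]; exact hge1
        · rw [show ι j = i2 from Fin.ext (by simp [hv, h, hi2]), ← he2]; exact hge2
        · rw [show ι j = i3 from Fin.ext (by simp [hv, h, hi3]), ← he3]; exact hge3
      obtain ⟨y', hy'eq⟩ : ∃ f : Fin 4 → Uspan,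
          ∀ j, (f j : Fin d → ZMod 2) = g.symm (Pi.single (ι j) 1 : Fin d → ZMod 2) :=
        ⟨fun j => ⟨g.symm (Pi.single (ι j) 1 : Fin d → ZMod 2), hιval j⟩, fun j => rfl⟩
      have hy' : LinearIndependent (ZMod 2) y' := by
        apply LinearIndependent.of_comp Uspan.subtype
        have hcomp : ⇑Uspan.subtype ∘ y'
            = fun j : Fin 4 => g.symm (Pi.single (ι j) 1 : Fin d → ZMod 2) := funext hy'eq
        rw [hcomp]
        exact hmap
      have hcard4 := hy'.fintype_card_le_finrank
      rw [Fintype.card_fin] at hcard4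
      have hfinrank : Module.finrank (ZMod 2) Uspan ≤ 3 := by
        rw [hUspan]
        refine le_trans (finrank_span_le_card _) ?_
        rw [Set.toFinset_insert, Set.toFinset_insert, Set.toFinset_singleton]
        refine le_trans (Finset.card_insert_le _ _) (Nat.succ_le_succ ?_)
        refine le_trans (Finset.card_insert_le _ _) (Nat.succ_le_succ ?_)
        exact le_of_eq (Finset.card_singleton _)
      omega
    · -- d = 3 : Ufin = everything, so k = 2^d, contradiction
      have hd3 : d = 3 := by omega
      have huniv : (Finset.univ : Finset (Fin d → ZMod 2)) ⊆ b := by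
        intro x _
        apply hUb
        apply hspan_mem_fin
        apply hspan_univ
        intro j h0 h1 h2
        exfalso
        have hjlt := j.isLt
        have hv0 : j.val ≠ 0 := by
          intro hv; exact h0 (Fin.ext (by rw [hv, hi0]))
        have hv1 : j.val ≠ 1 := by
          intro hv; exact h1 (Fin.ext (by rw [hv, hi1]))
        have hv2 : j.val ≠ 2 := by
          intro hv; exact h2 (Fin.ext (by rw [hv, hi2]))
        omega
      have : (2:ℕ) ^ d ≤ k := by
        rw [← hcard_univ, ← hblocks b hbB]
        exact Finset.card_le_card huniv
      omega
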